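/- For all real b > 0, μ ≥ 0, and every integer k ≥ 1: Π_{i=1}^{k} ((b·i + μ)/i) ≤ b^k · e^{μ/b} · k^{μ/b}. -/

import Mathlib

lemma harmonic_le_log (k : ℕ) (hk : 1 ≤ k) :
    ∑ i ∈ Finset.Icc 1 k, (1 : ℝ) / i ≤ 1 + Real.log k := by
  induction k with
  | zero => omega
  | succ n ih =>
    rcases Nat.eq_or_lt_of_le hk with h | h
    · simp [← h]
    · have hn : 1 ≤ n := by omega
      have hnpos : (0 : ℝ) < n := by exact_mod_cast hn
      have hsum : ∑ i ∈ Finset.Icc 1 (n + 1), (1 : ℝ) / i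
          = (∑ i ∈ Finset.Icc 1 n, (1 : ℝ) / i) + 1 / (n + 1) := by
        rw [Finset.sum_Icc_succ_top (by omega)]
        push_cast
        ring
      have hlog : Real.log (n / (n + 1) : ℝ) ≤ (n / (n + 1) : ℝ) - 1 :=
        Real.log_le_sub_one_of_pos (by positivity)
      have hdiv : Real.log (n / (n + 1) : ℝ) = Real.log n - Real.log (n + 1) :=
        Real.log_div (ne_of_gt hnpos) (by positivity)
      have hstep : (1 : ℝ) / (n + 1) ≤ Real.log (n + 1) - Real.log n := by
        rw [hdiv] at hlog
        have : (n / (n + 1) : ℝ) - 1 = -(1 / (n + 1)) := by field_simp; ring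
        linarith [hlog, this ▸ hlog]
      have := ih hn
      rw [hsum]
      push_cast
      linarith
/-- **Core product estimate for subcritical SIS epidemics (Theorem 1).**
For `b > 0`, `μ ≥ 0` and every integer `k ≥ 1`,
`∏_{i=1}^{k} (b·i + μ)/i ≤ b^k · e^{μ/b} · k^{μ/b}`. -/
theorem stmt4 (b μ : ℝ) (hb : 0 < b) (hμ : 0 ≤ μ) (k : ℕ) (hk : 1 ≤ k) :
    ∏ i ∈ Finset.Icc 1 k, ((b * i + μ) / i) ≤
      b ^ k * Real.exp (μ / b) * (k : ℝ) ^ (μ / b) := by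
  have hkpos : (0 : ℝ) < k := by exact_mod_cast hk
  -- each factor = b * (1 + μ/(b*i)) ≤ b * exp(μ/(b*i))
  have step : ∀ i ∈ Finset.Icc 1 k, (b * i + μ) / i ≤ b * Real.exp (μ / (b * i)) := by
    intro i hi
    have hi1 : 1 ≤ i := (Finset.mem_Icc.mp hi).1
    have hip : (0 : ℝ) < i := by exact_mod_cast hi1
    have heq : (b * i + μ) / i = b * (1 + μ / (b * i)) := by
      field_simp
    rw [heq]
    have := Real.add_one_le_exp (μ / (b * i))
    have h1 : 1 + μ / (b * i) ≤ Real.exp (μ / (b * i)) := by linarith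
    exact mul_le_mul_of_nonneg_left h1 hb.le
  have hprod : ∏ i ∈ Finset.Icc 1 k, ((b * i + μ) / i)
      ≤ ∏ i ∈ Finset.Icc 1 k, (b * Real.exp (μ / (b * i))) := by
    apply Finset.prod_le_prod
    · intro i hi
      have hi1 : 1 ≤ i := (Finset.mem_Icc.mp hi).1
      have hip : (0 : ℝ) < i := by exact_mod_cast hi1
      positivity
    · exact step
  have hcard : (Finset.Icc 1 k).card = k := by simp
  have hprod2 : ∏ i ∈ Finset.Icc 1 k, (b * Real.exp (μ / (b * i)))
      = b ^ k * Real.exp (∑ i ∈ Finset.Icc 1 k, μ / (b * i)) := by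
    rw [Finset.prod_mul_distrib, Finset.prod_const, hcard, Real.exp_sum]
  have hsum : ∑ i ∈ Finset.Icc 1 k, μ / (b * i)
      = (μ / b) * ∑ i ∈ Finset.Icc 1 k, (1 : ℝ) / i := by
    rw [Finset.mul_sum]
    apply Finset.sum_congr rfl
    intro i _
    field_simp
  have hH := harmonic_le_log k hk
  have hmb : 0 ≤ μ / b := div_nonneg hμ hb.le
  have hexp : Real.exp (∑ i ∈ Finset.Icc 1 k, μ / (b * i))
      ≤ Real.exp (μ / b * (1 + Real.log k)) := by
    apply Real.exp_le_exp.mpr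
    rw [hsum]
    exact mul_le_mul_of_nonneg_left hH hmb
  have hrpow : (k : ℝ) ^ (μ / b) = Real.exp (μ / b * Real.log k) := by
    rw [Real.rpow_def_of_pos hkpos]; ring_nf
  calc ∏ i ∈ Finset.Icc 1 k, ((b * i + μ) / i)
      ≤ b ^ k * Real.exp (∑ i ∈ Finset.Icc 1 k, μ / (b * i)) := by
        rw [← hprod2]; exact hprod
    _ ≤ b ^ k * Real.exp (μ / b * (1 + Real.log k)) := by
        exact mul_le_mul_of_nonneg_left hexp (by positivity)
    _ = b ^ k * Real.exp (μ / b) * (k : ℝ) ^ (μ / b) := by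
        rw [hrpow, mul_assoc, ← Real.exp_add]; ring_nf
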